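/- If a list of positive integers x_1, ..., x_s has sum at most 2s-1, then for every integer k with 0 ≤ k ≤ s there is a sublist (subset of indices) whose sum equals k. -/

import Mathlib

theorem sublist_sums_aux {ι : Type*} [DecidableEq ι] :
    ∀ n (A : Finset ι) (x : ι → ℕ), A.card = n → (∀ i ∈ A, 0 < x i) →
    (∑ i ∈ A, x i ≤ 2 * n - 1) → ∀ k ≤ n, ∃ T ⊆ A, ∑ i ∈ T, x i = k := by
  intro n
  induction n with
  | zero =>
    intro A x hcard hpos hsum k hk
    exact ⟨∅, Finset.empty_subset _, by simp; omega⟩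
  | succ n ih =>
    intro A x hcard hpos hsum k hk
    have hne : A.Nonempty := Finset.card_pos.mp (by omega)
    obtain ⟨i, hiA, hmax⟩ := Finset.exists_max_image A x hne
    have hsplit : x i + ∑ j ∈ A.erase i, x j = ∑ j ∈ A, x j :=
      Finset.add_sum_erase A x hiA
    have hcard' : (A.erase i).card = n := by
      rw [Finset.card_erase_of_mem hiA, hcard]; omega
    by_cases h1 : x i = 1
    · -- all elements equal 1
      have hall : ∀ j ∈ A, x j = 1 := fun j hj => le_antisymm (h1 ▸ hmax j hj) (hpos j hj)
      obtain ⟨T, hTA, hTcard⟩ := Finset.exists_subset_card_eq (s := A) (n := k) (by omega)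
      refine ⟨T, hTA, ?_⟩
      rw [Finset.sum_congr rfl (fun j hj => hall j (hTA hj))]
      simp [hTcard]
    · have h2 : 2 ≤ x i := by have := hpos i hiA; omega
      have hsum' : ∑ j ∈ A.erase i, x j ≤ 2 * n - 1 := by omega
      have hpos' : ∀ j ∈ A.erase i, 0 < x j := fun j hj => hpos j (Finset.mem_of_mem_erase hj)
      rcases Nat.lt_or_ge k (n + 1) with hks | hks
      · obtain ⟨T, hT, hTs⟩ := ih (A.erase i) x hcard' hpos' hsum' k (by omega)
        exact ⟨T, hT.trans (Finset.erase_subset _ _), hTs⟩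
      · -- k = n + 1
        have hk' : k = n + 1 := by omega
        have hlow : n ≤ ∑ j ∈ A.erase i, x j := by
          calc n = ∑ _j ∈ A.erase i, 1 := by simp [hcard']
          _ ≤ ∑ j ∈ A.erase i, x j := Finset.sum_le_sum (fun j hj => hpos' j hj)
        have hmle : x i ≤ n + 1 := by omega
        obtain ⟨T, hT, hTs⟩ := ih (A.erase i) x hcard' hpos' hsum' (n + 1 - x i) (by omega)
        refine ⟨insert i T, ?_, ?_⟩
        · exact Finset.insert_subset hiA (hT.trans (Finset.erase_subset _ _))
        · have hiT : i ∉ T := fun h => (Finset.notMem_erase i A) (hT h)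
          rw [Finset.sum_insert hiT, hTs]
          omega

theorem sublist_sums (s : ℕ) (x : Fin s → ℕ) (hpos : ∀ i, 0 < x i)
    (hsum : ∑ i, x i ≤ 2 * s - 1) :
    ∀ k : ℕ, k ≤ s → ∃ T : Finset (Fin s), ∑ i ∈ T, x i = k := by
  intro k hk
  obtain ⟨T, _, hT⟩ := sublist_sums_aux s Finset.univ x (by simp)
    (fun i _ => hpos i) hsum k hk
  exact ⟨T, hT⟩
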